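/- There is a unique polynomial Φ(z,ν) in two variables, of degree m in ν with leading ν-coefficient 1 and with all coefficients real, such that D(z,τ) = (2τ)^m·Φ(z, (τ + τ⁻¹)/2) for all z ∈ ℂ and all τ ∈ ℂ with τ ≠ 0. -/

import Mathlib

open Matrix Polynomial

/-- Fundamental matrix-valued solutions of the Jacobi recursion
`y_{n+1} = a_n⁻¹ ((z I - b_n) y_n - a_{n-1}ᵀ y_{n-1})`. -/
noncomputable def matSol {m : ℕ} (a b : ℤ → Matrix (Fin m) (Fin m) ℝ) (z : ℂ)
    (y0 y1 : Matrix (Fin m) (Fin m) ℂ) : ℕ → Matrix (Fin m) (Fin m) ℂ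
  | 0 => y0
  | 1 => y1
  | n + 2 =>
      (((a ((n : ℤ) + 1))⁻¹).map Complex.ofReal) *
        ((z • (1 : Matrix (Fin m) (Fin m) ℂ) - (b ((n : ℤ) + 1)).map Complex.ofReal) *
            matSol a b z y0 y1 (n + 1) -
          ((a (n : ℤ)).map Complex.ofReal)ᵀ * matSol a b z y0 y1 n)

/-- The monodromy matrix `ℳ_p(z) = [[θ_p, φ_p], [θ_{p+1}, φ_{p+1}]]`. -/
noncomputable def monodromy {m : ℕ} (a b : ℤ → Matrix (Fin m) (Fin m) ℝ) (p : ℕ) (z : ℂ) :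
    Matrix (Fin m ⊕ Fin m) (Fin m ⊕ Fin m) ℂ :=
  Matrix.fromBlocks (matSol a b z 1 0 p) (matSol a b z 0 1 p)
    (matSol a b z 1 0 (p + 1)) (matSol a b z 0 1 (p + 1))

/-- `D(z,τ) = det(ℳ_p(z) - τ I_{2m})`. -/
noncomputable def Dfun {m : ℕ} (a b : ℤ → Matrix (Fin m) (Fin m) ℝ) (p : ℕ) (z τ : ℂ) : ℂ :=
  (monodromy a b p z - τ • (1 : Matrix (Fin m ⊕ Fin m) (Fin m ⊕ Fin m) ℂ)).det

/-- Value of a real two-variable polynomial `Φ(z,ν)` (inner variable `z`, outer variable `ν`)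
at complex arguments. -/
noncomputable def evalPhi (Φ : Polynomial (Polynomial ℝ)) (z ν : ℂ) : ℂ :=
  Polynomial.eval z
    (Polynomial.eval (Polynomial.C ν) (Φ.map (Polynomial.mapRingHom Complex.ofRealHom)))

namespace JacobiAux

variable {m : ℕ} (a b : ℤ → Matrix (Fin m) (Fin m) ℝ) (z : ℂ)

/-- real matrix mapped into ℂ -/
noncomputable def Am (n : ℤ) : Matrix (Fin m) (Fin m) ℂ := (a n).map Complex.ofReal
noncomputable def Aim (a : ℤ → Matrix (Fin m) (Fin m) ℝ) (n : ℤ) :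
    Matrix (Fin m) (Fin m) ℂ := ((a n)⁻¹).map Complex.ofReal
noncomputable def Bm (b : ℤ → Matrix (Fin m) (Fin m) ℝ) (n : ℤ) :
    Matrix (Fin m) (Fin m) ℂ := (b n).map Complex.ofReal

lemma Am_mul_Aim (ha_inv : ∀ n : ℤ, IsUnit (a n).det) (n : ℤ) :
    Am a n * Aim a n = 1 := by
  have : ((a n * (a n)⁻¹).map (Complex.ofRealHom : ℝ →+* ℂ)) = (1 : Matrix (Fin m) (Fin m) ℝ).map Complex.ofRealHom := by
    rw [Matrix.mul_nonsing_inv _ (ha_inv n)]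
  rw [Matrix.map_mul] at this
  rw [Matrix.map_one _ (map_zero _) (map_one _)] at this
  exact this

lemma Aim_mul_Am (ha_inv : ∀ n : ℤ, IsUnit (a n).det) (n : ℤ) :
    Aim a n * Am a n = 1 := by
  have : (((a n)⁻¹ * a n).map (Complex.ofRealHom : ℝ →+* ℂ)) = (1 : Matrix (Fin m) (Fin m) ℝ).map Complex.ofRealHom := by
    rw [Matrix.nonsing_inv_mul _ (ha_inv n)]
  rw [Matrix.map_mul] at this
  rw [Matrix.map_one _ (map_zero _) (map_one _)] at this
  exact this

/-- the state matrix -/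
noncomputable def stateM (n : ℕ) : Matrix (Fin m ⊕ Fin m) (Fin m ⊕ Fin m) ℂ :=
  Matrix.fromBlocks (matSol a b z 1 0 n) (matSol a b z 0 1 n)
    (matSol a b z 1 0 (n + 1)) (matSol a b z 0 1 (n + 1))

/-- one-step transfer matrix -/
noncomputable def Tm (n : ℕ) : Matrix (Fin m ⊕ Fin m) (Fin m ⊕ Fin m) ℂ :=
  Matrix.fromBlocks 0 1 (-(Aim a ((n : ℤ) + 1) * (Am a (n : ℤ))ᵀ))
    (Aim a ((n : ℤ) + 1) * (z • (1 : Matrix (Fin m) (Fin m) ℂ) - Bm b ((n : ℤ) + 1)))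

lemma stateM_zero : stateM a b z 0 = 1 := by
  show Matrix.fromBlocks (matSol a b z 1 0 0) (matSol a b z 0 1 0)
    (matSol a b z 1 0 1) (matSol a b z 0 1 1) = 1
  rw [show matSol a b z 1 0 0 = 1 from rfl, show matSol a b z 0 1 0 = 0 from rfl,
    show matSol a b z 1 0 1 = 0 from rfl, show matSol a b z 0 1 1 = 1 from rfl,
    Matrix.fromBlocks_one]

lemma stateM_succ (n : ℕ) : stateM a b z (n + 1) = Tm a b z n * stateM a b z n := by
  unfold stateM Tm
  rw [Matrix.fromBlocks_multiply]
  have h10 : matSol a b z 1 0 (n + 2) =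
      -(Aim a ((n : ℤ) + 1) * (Am a (n : ℤ))ᵀ) * matSol a b z 1 0 n +
        Aim a ((n : ℤ) + 1) * (z • (1 : Matrix (Fin m) (Fin m) ℂ) - Bm b ((n : ℤ) + 1)) *
          matSol a b z 1 0 (n + 1) := by
    show (((a ((n : ℤ) + 1))⁻¹).map Complex.ofReal) * _ = _
    unfold Aim Am Bm
    rw [Matrix.mul_sub]
    simp only [Matrix.neg_mul, Matrix.mul_assoc]
    abel
  have h01 : matSol a b z 0 1 (n + 2) =
      -(Aim a ((n : ℤ) + 1) * (Am a (n : ℤ))ᵀ) * matSol a b z 0 1 n +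
        Aim a ((n : ℤ) + 1) * (z • (1 : Matrix (Fin m) (Fin m) ℂ) - Bm b ((n : ℤ) + 1)) *
          matSol a b z 0 1 (n + 1) := by
    show (((a ((n : ℤ) + 1))⁻¹).map Complex.ofReal) * _ = _
    unfold Aim Am Bm
    rw [Matrix.mul_sub]
    simp only [Matrix.neg_mul, Matrix.mul_assoc]
    abel
  rw [← h10, ← h01]
  simp [Matrix.zero_mul, Matrix.one_mul]

end JacobiAux

namespace JacobiAux2
open JacobiAux

variable {m : ℕ} (a b : ℤ → Matrix (Fin m) (Fin m) ℝ) (z : ℂ)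

noncomputable def Jm (a : ℤ → Matrix (Fin m) (Fin m) ℝ) (n : ℤ) :
    Matrix (Fin m ⊕ Fin m) (Fin m ⊕ Fin m) ℂ :=
  Matrix.fromBlocks 0 (Am a n) (-(Am a n)ᵀ) 0

lemma Bm_symm (hb_sym : ∀ n : ℤ, (b n)ᵀ = b n) (n : ℤ) : (Bm b n)ᵀ = Bm b n := by
  unfold Bm; rw [← Matrix.transpose_map, hb_sym]

lemma T_symp (hb_sym : ∀ n : ℤ, (b n)ᵀ = b n) (ha_inv : ∀ n : ℤ, IsUnit (a n).det) (n : ℕ) :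
    (Tm a b z n)ᵀ * Jm a ((n : ℤ) + 1) * Tm a b z n = Jm a (n : ℤ) := by
  set A' := Am a ((n : ℤ) + 1)
  set Ai := Aim a ((n : ℤ) + 1)
  set Cn := Am a (n : ℤ)
  set S := z • (1 : Matrix (Fin m) (Fin m) ℂ) - Bm b ((n : ℤ) + 1) with hSdef
  have h1 : A' * Ai = 1 := Am_mul_Aim a ha_inv _
  have hS : Sᵀ = S := by
    rw [hSdef, Matrix.transpose_sub, Matrix.transpose_smul, Matrix.transpose_one,
      Bm_symm b hb_sym]
  unfold Tm Jm
  rw [Matrix.fromBlocks_transpose, Matrix.fromBlocks_multiply, Matrix.fromBlocks_multiply]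
  rw [Matrix.fromBlocks_inj]
  refine ⟨?_, ?_, ?_, ?_⟩
  · simp [Matrix.mul_assoc, ← Matrix.mul_assoc Ai A' _, h1,
      show Aim a ((n:ℤ)+1) = Ai from rfl, show Am a ((n:ℤ)+1) = A' from rfl]
  · simp only [Matrix.transpose_neg, Matrix.transpose_mul, Matrix.transpose_transpose,
      Matrix.transpose_zero, Matrix.transpose_one, Matrix.zero_mul, Matrix.mul_zero,
      Matrix.one_mul, Matrix.mul_one, Matrix.neg_mul, Matrix.mul_neg, neg_neg, add_zero,
      zero_add]
    rw [Matrix.mul_assoc, ← Matrix.transpose_mul, h1, Matrix.transpose_one, Matrix.mul_one]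
  · simp only [Matrix.transpose_neg, Matrix.transpose_mul, Matrix.transpose_transpose,
      Matrix.transpose_zero, Matrix.transpose_one, Matrix.zero_mul, Matrix.mul_zero,
      Matrix.one_mul, Matrix.mul_one, Matrix.neg_mul, Matrix.mul_neg, neg_neg, add_zero,
      zero_add, neg_inj]
    rw [← Matrix.mul_assoc, h1, Matrix.one_mul]
  · simp only [Matrix.transpose_neg, Matrix.transpose_mul, Matrix.transpose_transpose,
      Matrix.transpose_zero, Matrix.transpose_one, Matrix.zero_mul, Matrix.mul_zero,
      Matrix.one_mul, Matrix.mul_one, Matrix.neg_mul, Matrix.mul_neg, neg_neg, add_zero,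
      zero_add, hS]
    rw [Matrix.mul_assoc _ (Aim a ((n:ℤ)+1))ᵀ, ← Matrix.transpose_mul (Am a ((n:ℤ)+1)),
      Am_mul_Aim a ha_inv, Matrix.transpose_one, Matrix.mul_one, ← Matrix.mul_assoc,
      Am_mul_Aim a ha_inv, Matrix.one_mul, Matrix.transpose_sub, Matrix.transpose_smul,
      Matrix.transpose_one, Bm_symm b hb_sym, neg_add_cancel]

lemma state_symp (hb_sym : ∀ n : ℤ, (b n)ᵀ = b n) (ha_inv : ∀ n : ℤ, IsUnit (a n).det)
    (n : ℕ) :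
    (stateM a b z n)ᵀ * Jm a (n : ℤ) * stateM a b z n = Jm a 0 := by
  induction n with
  | zero => simp [stateM_zero]
  | succ n ih =>
    rw [stateM_succ, Matrix.transpose_mul]
    calc (stateM a b z n)ᵀ * (Tm a b z n)ᵀ * Jm a ((n : ℤ) + 1) * (Tm a b z n * stateM a b z n)
        = (stateM a b z n)ᵀ * ((Tm a b z n)ᵀ * Jm a ((n : ℤ) + 1) * Tm a b z n) *
            stateM a b z n := by
          simp only [Matrix.mul_assoc]
      _ = Jm a 0 := by rw [T_symp a b z hb_sym ha_inv n]; exact ih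

lemma mono_symp (p : ℕ) (ha_per : ∀ n : ℤ, a (n + p) = a n)
    (hb_sym : ∀ n : ℤ, (b n)ᵀ = b n) (ha_inv : ∀ n : ℤ, IsUnit (a n).det) :
    (monodromy a b p z)ᵀ * Jm a 0 * monodromy a b p z = Jm a 0 := by
  have h1 : monodromy a b p z = stateM a b z p := rfl
  have h2 : Jm a (p : ℤ) = Jm a 0 := by
    unfold Jm Am
    have := ha_per 0
    rw [zero_add] at this
    rw [this]
  have hst := state_symp a b z hb_sym ha_inv p
  rw [h2] at hst
  rw [h1]
  exact hst

lemma det_T (ha_inv : ∀ n : ℤ, IsUnit (a n).det) (n : ℕ) :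
    (Tm a b z n).det = (Aim a ((n : ℤ) + 1)).det * (Am a (n : ℤ)).det := by
  set X := -(Aim a ((n : ℤ) + 1) * (Am a (n : ℤ))ᵀ) with hX
  set Y := Aim a ((n : ℤ) + 1) * (z • (1 : Matrix (Fin m) (Fin m) ℂ) - Bm b ((n : ℤ) + 1))
  have key : Tm a b z n * Matrix.fromBlocks 1 0 1 1 = Matrix.fromBlocks 1 1 (X + Y) Y := by
    unfold Tm
    rw [Matrix.fromBlocks_multiply]
    simp
    exact ⟨rfl, rfl⟩
  have hdet : (Tm a b z n).det * 1 = (Matrix.fromBlocks (1 : Matrix (Fin m) (Fin m) ℂ) 1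
      (X + Y) Y).det := by
    rw [← key, Matrix.det_mul]
    congr 1
    rw [Matrix.det_fromBlocks_zero₁₂, Matrix.det_one, one_mul]
  rw [mul_one] at hdet
  rw [hdet, Matrix.det_fromBlocks_one₁₁]
  have : Y - (X + Y) * 1 = -X := by rw [Matrix.mul_one]; abel
  rw [this, hX, neg_neg, Matrix.det_mul, ← Matrix.det_transpose (Am a (n : ℤ))]

lemma det_state (ha_inv : ∀ n : ℤ, IsUnit (a n).det) (n : ℕ) :
    (stateM a b z n).det * (Am a (n : ℤ)).det = (Am a 0).det := by
  induction n with
  | zero => rw [stateM_zero, Matrix.det_one, one_mul]; rfl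
  | succ n ih =>
    have h1 : (Aim a ((n : ℤ) + 1)).det * (Am a ((n : ℤ) + 1)).det = 1 := by
      rw [← Matrix.det_mul, Aim_mul_Am a ha_inv, Matrix.det_one]
    rw [stateM_succ, Matrix.det_mul, det_T a b z ha_inv n]
    push_cast
    calc (Aim a ((n:ℤ) + 1)).det * (Am a (n:ℤ)).det * (stateM a b z n).det *
          (Am a ((n:ℤ) + 1)).det
        = ((Aim a ((n:ℤ) + 1)).det * (Am a ((n:ℤ) + 1)).det) *
            ((stateM a b z n).det * (Am a (n:ℤ)).det) := by ring
      _ = (Am a 0).det := by rw [h1, ih, one_mul]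

lemma det_mono (p : ℕ) (ha_per : ∀ n : ℤ, a (n + p) = a n)
    (ha_inv : ∀ n : ℤ, IsUnit (a n).det) :
    (monodromy a b p z).det = 1 := by
  have h1 : monodromy a b p z = stateM a b z p := rfl
  have h2 := det_state a b z ha_inv p
  have h3 : Am a (p : ℤ) = Am a 0 := by
    unfold Am
    have := ha_per 0
    rw [zero_add] at this
    rw [this]
  rw [h3] at h2
  have hu : IsUnit ((Am a 0 : Matrix (Fin m) (Fin m) ℂ)).det := by
    unfold Am
    have : (Am a 0).det = Complex.ofRealHom (a 0).det := ((Complex.ofRealHom).map_det _).symm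
    rw [show ((a 0).map Complex.ofReal) = Am a 0 from rfl, this]
    exact (ha_inv 0).map Complex.ofRealHom
  rw [h1]
  have h4 : (stateM a b z p).det * (Am a 0).det = 1 * (Am a 0).det := by
    rw [one_mul]; exact h2
  exact mul_right_cancel₀ hu.ne_zero h4

noncomputable def Jim (a : ℤ → Matrix (Fin m) (Fin m) ℝ) :
    Matrix (Fin m ⊕ Fin m) (Fin m ⊕ Fin m) ℂ :=
  Matrix.fromBlocks 0 (-(Aim a 0)ᵀ) (Aim a 0) 0

lemma J_mul_Ji (ha_inv : ∀ n : ℤ, IsUnit (a n).det) : Jm a 0 * Jim a = 1 := by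
  unfold Jm Jim
  rw [Matrix.fromBlocks_multiply]
  have h1 : Am a 0 * Aim a 0 = 1 := Am_mul_Aim a ha_inv 0
  have h2 : Aim a 0 * Am a 0 = 1 := Aim_mul_Am a ha_inv 0
  simp only [Matrix.zero_mul, Matrix.mul_zero, Matrix.mul_neg, zero_add, add_zero,
    Matrix.neg_mul, neg_neg, h1]
  rw [← Matrix.transpose_mul, h2, Matrix.transpose_one, neg_zero, Matrix.fromBlocks_one]

lemma Ji_mul_J (ha_inv : ∀ n : ℤ, IsUnit (a n).det) : Jim a * Jm a 0 = 1 := by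
  unfold Jm Jim
  rw [Matrix.fromBlocks_multiply]
  have h1 : Am a 0 * Aim a 0 = 1 := Am_mul_Aim a ha_inv 0
  have h2 : Aim a 0 * Am a 0 = 1 := Aim_mul_Am a ha_inv 0
  simp only [Matrix.zero_mul, Matrix.mul_zero, Matrix.mul_neg, zero_add, add_zero,
    Matrix.neg_mul, neg_neg, h2]
  rw [← Matrix.transpose_mul, h1, Matrix.transpose_one, neg_zero, Matrix.fromBlocks_one]

lemma Dfun_pal (p : ℕ) (ha_per : ∀ n : ℤ, a (n + p) = a n)
    (hb_sym : ∀ n : ℤ, (b n)ᵀ = b n) (ha_inv : ∀ n : ℤ, IsUnit (a n).det)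
    (τ : ℂ) (hτ : τ ≠ 0) :
    Dfun a b p z τ = τ ^ (m + m) * Dfun a b p z τ⁻¹ := by
  set M := monodromy a b p z with hM
  set J := Jm a 0
  set Ji := Jim a
  have hdetM : M.det = 1 := det_mono a b z p ha_per ha_inv
  have hMu : IsUnit M.det := by rw [hdetM]; exact isUnit_one
  have hsymp : Mᵀ * J * M = J := mono_symp a b z p ha_per hb_sym ha_inv
  have hJJi : J * Ji = 1 := J_mul_Ji a ha_inv
  have h5 : J * M⁻¹ = Mᵀ * J := by
    have h := congrArg (· * M⁻¹) hsymp
    rw [Matrix.mul_assoc, Matrix.mul_nonsing_inv _ hMu, Matrix.mul_one] at h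
    exact h.symm
  have h6 : Mᵀ - τ • 1 = J * (M⁻¹ - τ • (1 : Matrix (Fin m ⊕ Fin m) (Fin m ⊕ Fin m) ℂ)) * Ji := by
    rw [Matrix.mul_sub, Matrix.sub_mul, h5, Matrix.mul_smul, Matrix.mul_one, Matrix.smul_mul,
      hJJi, Matrix.mul_assoc, hJJi, Matrix.mul_one]
  have h7 : (Mᵀ - τ • (1 : Matrix (Fin m ⊕ Fin m) (Fin m ⊕ Fin m) ℂ)).det
      = (M⁻¹ - τ • (1 : Matrix (Fin m ⊕ Fin m) (Fin m ⊕ Fin m) ℂ)).det := by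
    rw [h6, Matrix.det_mul, Matrix.det_mul]
    have : J.det * Ji.det = 1 := by rw [← Matrix.det_mul, hJJi, Matrix.det_one]
    calc J.det * (M⁻¹ - τ • (1:Matrix (Fin m ⊕ Fin m) (Fin m ⊕ Fin m) ℂ)).det * Ji.det
        = (M⁻¹ - τ • (1:Matrix (Fin m ⊕ Fin m) (Fin m ⊕ Fin m) ℂ)).det * (J.det * Ji.det) := by
          ring
      _ = _ := by rw [this, mul_one]
  have h8 : M⁻¹ - τ • (1 : Matrix (Fin m ⊕ Fin m) (Fin m ⊕ Fin m) ℂ)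
      = M⁻¹ * (1 - τ • M) := by
    rw [Matrix.mul_sub, Matrix.mul_one, Matrix.mul_smul, Matrix.nonsing_inv_mul _ hMu]
  have h9 : (M⁻¹).det = 1 := by
    rw [Matrix.det_nonsing_inv, hdetM, Ring.inverse_one]
  have h10 : (-τ) • (M - τ⁻¹ • (1 : Matrix (Fin m ⊕ Fin m) (Fin m ⊕ Fin m) ℂ)) = 1 - τ • M := by
    rw [smul_sub, smul_smul, neg_mul, mul_inv_cancel₀ hτ, neg_smul τ, neg_smul (1:ℂ), one_smul,
      sub_neg_eq_add]
    abel
  have hcard : Fintype.card (Fin m ⊕ Fin m) = m + m := by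
    simp [Fintype.card_sum]
  have h11 : (1 - τ • M).det = τ ^ (m + m) * (M - τ⁻¹ • (1 : Matrix (Fin m ⊕ Fin m) (Fin m ⊕ Fin m) ℂ)).det := by
    rw [← h10, Matrix.det_smul, hcard]
    congr 1
    exact Even.neg_pow ⟨m, rfl⟩ τ
  show (M - τ • (1 : Matrix (Fin m ⊕ Fin m) (Fin m ⊕ Fin m) ℂ)).det = τ ^ (m+m) * Dfun a b p z τ⁻¹
  calc (M - τ • (1 : Matrix (Fin m ⊕ Fin m) (Fin m ⊕ Fin m) ℂ)).det
      = ((M - τ • (1 : Matrix (Fin m ⊕ Fin m) (Fin m ⊕ Fin m) ℂ))ᵀ).det := by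
        rw [Matrix.det_transpose]
    _ = (Mᵀ - τ • (1 : Matrix (Fin m ⊕ Fin m) (Fin m ⊕ Fin m) ℂ)).det := by
        rw [Matrix.transpose_sub, Matrix.transpose_smul, Matrix.transpose_one]
    _ = (M⁻¹ - τ • (1 : Matrix (Fin m ⊕ Fin m) (Fin m ⊕ Fin m) ℂ)).det := h7
    _ = (M⁻¹).det * (1 - τ • M).det := by rw [h8, Matrix.det_mul]
    _ = τ ^ (m + m) * (M - τ⁻¹ • (1 : Matrix (Fin m ⊕ Fin m) (Fin m ⊕ Fin m) ℂ)).det := by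
        rw [h9, one_mul, h11]
    _ = τ ^ (m+m) * Dfun a b p z τ⁻¹ := rfl

end JacobiAux2

namespace JacobiAux3
open JacobiAux JacobiAux2

variable {m : ℕ} (a b : ℤ → Matrix (Fin m) (Fin m) ℝ)

/-- polynomial-coefficient version of `matSol` (the spectral variable is `X`) -/
noncomputable def matSolR (a b : ℤ → Matrix (Fin m) (Fin m) ℝ)
    (y0 y1 : Matrix (Fin m) (Fin m) (Polynomial ℝ)) : ℕ → Matrix (Fin m) (Fin m) (Polynomial ℝ)
  | 0 => y0
  | 1 => y1
  | n + 2 =>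
      (((a ((n : ℤ) + 1))⁻¹).map Polynomial.C) *
        (((Polynomial.X : Polynomial ℝ) • (1 : Matrix (Fin m) (Fin m) (Polynomial ℝ)) -
            (b ((n : ℤ) + 1)).map Polynomial.C) * matSolR a b y0 y1 (n + 1) -
          ((a (n : ℤ)).map Polynomial.C)ᵀ * matSolR a b y0 y1 n)

/-- evaluation homomorphism `ℝ[X] →+* ℂ` at `z` -/
noncomputable def ψ (z : ℂ) : Polynomial ℝ →+* ℂ :=
  Polynomial.eval₂RingHom Complex.ofRealHom z

lemma map_smul_one (z : ℂ) (r : Polynomial ℝ) :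
    ((r • (1 : Matrix (Fin m) (Fin m) (Polynomial ℝ))).map (ψ z)) =
      (ψ z r) • (1 : Matrix (Fin m) (Fin m) ℂ) := by
  ext i j
  by_cases h : i = j <;>
    simp [Matrix.map_apply, Matrix.smul_apply, Matrix.one_apply, h, smul_eq_mul]

lemma map_C_map (z : ℂ) (M : Matrix (Fin m) (Fin m) ℝ) :
    ((M.map Polynomial.C).map (ψ z)) = M.map Complex.ofReal := by
  ext i j
  simp [Matrix.map_apply, ψ]

lemma matSolR_map (z : ℂ) (y0 y1 : Matrix (Fin m) (Fin m) (Polynomial ℝ)) (n : ℕ) :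
    (matSolR a b y0 y1 n).map (ψ z) = matSol a b z (y0.map (ψ z)) (y1.map (ψ z)) n := by
  induction n using Nat.twoStepInduction with
  | zero => rfl
  | one => rfl
  | more n ih1 ih2 =>
    show ((((a ((n : ℤ) + 1))⁻¹).map Polynomial.C) *
        (((Polynomial.X : Polynomial ℝ) • (1 : Matrix (Fin m) (Fin m) (Polynomial ℝ)) -
            (b ((n : ℤ) + 1)).map Polynomial.C) * matSolR a b y0 y1 (n + 1) -
          ((a (n : ℤ)).map Polynomial.C)ᵀ * matSolR a b y0 y1 n)).map (ψ z) = _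
    have hz : ψ z (Polynomial.X) = z := by simp [ψ]
    rw [Matrix.map_mul, Matrix.map_sub, Matrix.map_mul, Matrix.map_mul, Matrix.map_sub,
      map_smul_one, map_C_map, map_C_map, Matrix.transpose_map, map_C_map, ih2, ih1, hz]
    · rfl
    · exact fun x y => map_sub (ψ z) x y
    · exact fun x y => map_sub (ψ z) x y

/-- monodromy matrix over `ℝ[X]` -/
noncomputable def monodromyR (a b : ℤ → Matrix (Fin m) (Fin m) ℝ) (p : ℕ) :
    Matrix (Fin m ⊕ Fin m) (Fin m ⊕ Fin m) (Polynomial ℝ) :=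
  Matrix.fromBlocks (matSolR a b 1 0 p) (matSolR a b 0 1 p)
    (matSolR a b 1 0 (p + 1)) (matSolR a b 0 1 (p + 1))

lemma monodromyR_map (p : ℕ) (z : ℂ) :
    (monodromyR a b p).map (ψ z) = monodromy a b p z := by
  unfold monodromyR monodromy
  rw [Matrix.fromBlocks_map]
  rw [matSolR_map, matSolR_map, matSolR_map, matSolR_map]
  rw [Matrix.map_one _ (map_zero _) (map_one _), Matrix.map_zero _ (map_zero _)]

/-- `D` as a polynomial with coefficients in `ℝ[X]` -/
noncomputable def DR (a b : ℤ → Matrix (Fin m) (Fin m) ℝ) (p : ℕ) : Polynomial (Polynomial ℝ) :=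
  (monodromyR a b p).charpoly

lemma DR_monic (p : ℕ) : (DR a b p).Monic := (monodromyR a b p).charpoly_monic

lemma DR_natDegree (p : ℕ) : (DR a b p).natDegree = m + m := by
  unfold DR
  rw [Matrix.charpoly_natDegree_eq_dim]
  simp [Fintype.card_sum]

lemma charpoly_eval {n : Type*} [DecidableEq n] [Fintype n] (M : Matrix n n ℂ) (τ : ℂ) :
    M.charpoly.eval τ = (τ • (1 : Matrix n n ℂ) - M).det := by
  rw [Matrix.charpoly, ← Polynomial.coe_evalRingHom, RingHom.map_det]
  congr 1
  ext i j
  by_cases h : i = j <;>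
    simp [Matrix.charmatrix_apply, Matrix.map_apply, Matrix.one_apply, Matrix.smul_apply,
      Matrix.diagonal_apply, h, smul_eq_mul]

lemma Dfun_eval (p : ℕ) (z τ : ℂ) :
    Dfun a b p z τ = ((DR a b p).map (ψ z)).eval τ := by
  have h1 : (DR a b p).map (ψ z) = (monodromy a b p z).charpoly := by
    unfold DR
    rw [← monodromyR_map a b p z, Matrix.charpoly_map]
  rw [h1, charpoly_eval]
  unfold Dfun
  rw [show monodromy a b p z - τ • (1 : Matrix (Fin m ⊕ Fin m) (Fin m ⊕ Fin m) ℂ) =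
    -(τ • 1 - monodromy a b p z) from (neg_sub _ _).symm, Matrix.det_neg]
  simp [Fintype.card_sum, Even.neg_one_pow ⟨m, rfl⟩]

end JacobiAux3

namespace JacobiAux4
open JacobiAux JacobiAux2 JacobiAux3

variable {m : ℕ} (a b : ℤ → Matrix (Fin m) (Fin m) ℝ)

lemma reflect_eval {N : ℕ} (f : Polynomial ℂ) (hf : f.natDegree ≤ N) (τ : ℂ) (hτ : τ ≠ 0) :
    (f.reflect N).eval τ = τ ^ N * f.eval τ⁻¹ := by
  have : Invertible (τ⁻¹) := invertibleOfNonzero (inv_ne_zero hτ)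
  have h := Polynomial.eval₂_reflect_mul_pow (RingHom.id ℂ) (τ⁻¹) N f hf
  rw [invOf_eq_inv, inv_inv] at h
  rw [Polynomial.eval₂_eq_eval_map, Polynomial.eval₂_eq_eval_map, Polynomial.map_id,
    Polynomial.map_id] at h
  have hτN : (τ : ℂ) ^ N ≠ 0 := pow_ne_zero _ hτ
  field_simp at h
  rw [one_div, inv_pow] at h
  rw [← h, mul_comm, mul_assoc, inv_mul_cancel₀ hτN, mul_one]

lemma fz_reflect (p : ℕ) (ha_per : ∀ n : ℤ, a (n + p) = a n)
    (hb_sym : ∀ n : ℤ, (b n)ᵀ = b n) (ha_inv : ∀ n : ℤ, IsUnit (a n).det) (z : ℂ) :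
    ((DR a b p).map (ψ z)).reflect (m + m) = (DR a b p).map (ψ z) := by
  set f := (DR a b p).map (ψ z) with hf
  have hdeg : f.natDegree ≤ m + m := by
    rw [hf]
    exact le_trans Polynomial.natDegree_map_le (le_of_eq (DR_natDegree a b p))
  apply Polynomial.eq_of_infinite_eval_eq
  apply Set.Infinite.mono (s := {x : ℂ | x ≠ 0})
  · intro τ hτ
    have hτ' : τ ≠ 0 := hτ
    show (f.reflect (m + m)).eval τ = f.eval τ
    rw [reflect_eval f hdeg τ hτ']
    rw [hf, ← Dfun_eval, ← Dfun_eval]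
    exact (Dfun_pal a b z p ha_per hb_sym ha_inv τ hτ').symm
  · have : ({x : ℂ | x ≠ 0}) = ({0}ᶜ : Set ℂ) := by ext x; simp
    rw [this]
    exact Set.Finite.infinite_compl (Set.finite_singleton 0)

lemma DR_coeff_symm (p : ℕ) (ha_per : ∀ n : ℤ, a (n + p) = a n)
    (hb_sym : ∀ n : ℤ, (b n)ᵀ = b n) (ha_inv : ∀ n : ℤ, IsUnit (a n).det)
    (k : ℕ) (hk : k ≤ m + m) :
    (DR a b p).coeff k = (DR a b p).coeff (m + m - k) := by
  have key : ∀ z : ℂ, (ψ z) ((DR a b p).coeff k) = (ψ z) ((DR a b p).coeff (m + m - k)) := by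
    intro z
    have h := fz_reflect a b p ha_per hb_sym ha_inv z
    have h2 := congrArg (fun q => Polynomial.coeff q k) h
    simp only [Polynomial.coeff_reflect] at h2
    rw [Polynomial.revAt_le hk] at h2
    rw [Polynomial.coeff_map, Polynomial.coeff_map] at h2
    exact h2.symm
  set c := (DR a b p).coeff k - (DR a b p).coeff (m + m - k) with hc
  have hq : c.map Complex.ofRealHom = 0 := by
    apply Polynomial.funext
    intro z
    rw [Polynomial.eval_map, Polynomial.eval_zero]
    have : Polynomial.eval₂ Complex.ofRealHom z c = (ψ z) c := by simp [ψ]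
    rw [this, hc, map_sub, key z, sub_self]
  have : c = 0 := by
    have := Polynomial.map_injective Complex.ofRealHom Complex.ofReal_injective
    apply this
    rw [hq, Polynomial.map_zero]
  have := sub_eq_zero.mp this
  exact this

end JacobiAux4

namespace JacobiAux5
open Polynomial.Chebyshev

lemma chebT_eval (j : ℕ) (τ : ℂ) (hτ : τ ≠ 0) :
    (Polynomial.Chebyshev.T ℂ (j : ℤ)).eval ((τ + τ⁻¹) / 2) = (τ ^ j + τ⁻¹ ^ j) / 2 := by
  induction j using Nat.twoStepInduction with
  | zero => simp [Polynomial.Chebyshev.T_zero]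
  | one => simp [Polynomial.Chebyshev.T_one]
  | more n ih1 ih2 =>
    have hcast : ((n + 2 : ℕ) : ℤ) = (n : ℤ) + 2 := by push_cast; ring
    rw [hcast, Polynomial.Chebyshev.T_add_two]
    have hcast1 : ((n : ℤ) + 1) = ((n + 1 : ℕ) : ℤ) := by push_cast; ring
    rw [hcast1]
    simp only [Polynomial.eval_sub, Polynomial.eval_mul, Polynomial.eval_X,
      Polynomial.eval_ofNat, ih1, ih2]
    have e1 : τ * τ⁻¹ ^ (n + 1) = τ⁻¹ ^ n := by
      rw [pow_succ]
      field_simp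
      try ring
    have e2 : τ⁻¹ * τ ^ (n + 1) = τ ^ n := by
      rw [pow_succ]
      field_simp
      try ring
    linear_combination e1 / 2 + e2 / 2

variable {R : Type*} [CommRing R]

lemma chebT_coeff (n : ℕ) :
    (Polynomial.Chebyshev.T R ((n : ℤ) + 1)).natDegree ≤ n + 1 ∧
      (Polynomial.Chebyshev.T R ((n : ℤ) + 1)).coeff (n + 1) = 2 ^ n := by
  induction n using Nat.twoStepInduction with
  | zero =>
    constructor
    · simpa [Polynomial.Chebyshev.T_one] using Polynomial.natDegree_X_le
    · simp [Polynomial.Chebyshev.T_one]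
  | one =>
    have h2 : Polynomial.Chebyshev.T R (((1 : ℕ) : ℤ) + 1) = 2 * Polynomial.X ^ 2 - 1 := by
      rw [show (((1 : ℕ) : ℤ) + 1) = 2 by norm_num]
      exact Polynomial.Chebyshev.T_two R
    constructor
    · rw [h2]
      refine le_trans (Polynomial.natDegree_sub_le _ _) ?_
      simp only [Polynomial.natDegree_one, max_le_iff]
      constructor
      · refine le_trans (Polynomial.natDegree_mul_le) ?_
        simp only [Polynomial.natDegree_ofNat, zero_add]
        exact Polynomial.natDegree_X_pow_le 2
      · omega
    · rw [h2]
      have h2C : (2 : Polynomial R) = Polynomial.C (2 : R) :=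
        (map_ofNat (Polynomial.C : R →+* Polynomial R) 2).symm
      rw [Polynomial.coeff_sub, h2C, Polynomial.coeff_C_mul, Polynomial.coeff_X_pow,
        Polynomial.coeff_one]
      norm_num
  | more n ih1 ih2 =>
    have hrec : Polynomial.Chebyshev.T R ((n + 2 : ℕ) + 1) =
        2 * Polynomial.X * Polynomial.Chebyshev.T R ((n + 1 : ℕ) + 1) -
          Polynomial.Chebyshev.T R ((n : ℤ) + 1) := by
      have : ((n + 2 : ℕ) : ℤ) + 1 = ((n : ℤ) + 1) + 2 := by push_cast; ring
      rw [this, Polynomial.Chebyshev.T_add_two]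
      have : ((n : ℤ) + 1) + 1 = ((n + 1 : ℕ) : ℤ) + 1 := by push_cast; ring
      rw [this]
    obtain ⟨hd1, hc1⟩ := ih2
    obtain ⟨hd0, hc0⟩ := ih1
    constructor
    · rw [hrec]
      refine le_trans (Polynomial.natDegree_sub_le _ _) ?_
      rw [max_le_iff]
      constructor
      · refine le_trans (Polynomial.natDegree_mul_le) ?_
        have : (2 * Polynomial.X : Polynomial R).natDegree ≤ 1 := by
          refine le_trans (Polynomial.natDegree_mul_le) ?_
          simp [Polynomial.natDegree_X_le]
        omega
      · omega
    · rw [hrec, Polynomial.coeff_sub]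
      have hzero : (Polynomial.Chebyshev.T R ((n : ℤ) + 1)).coeff (n + 2 + 1) = 0 := by
        apply Polynomial.coeff_eq_zero_of_natDegree_lt
        omega
      have h2C : (2 : Polynomial R) = Polynomial.C (2 : R) :=
        (map_ofNat (Polynomial.C : R →+* Polynomial R) 2).symm
      have hmul : 2 * Polynomial.X * Polynomial.Chebyshev.T R ((n + 1 : ℕ) + 1) =
          Polynomial.C (2 : R) *
            (Polynomial.X * Polynomial.Chebyshev.T R ((n + 1 : ℕ) + 1)) := by
        rw [← h2C]; ring
      rw [hmul, Polynomial.coeff_C_mul]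
      rw [show n + 2 + 1 = (n + 2) + 1 from rfl, Polynomial.coeff_X_mul]
      rw [show n + 2 = (n + 1) + 1 from rfl, hc1, hzero]
      ring

end JacobiAux5

namespace JacobiAux6
open JacobiAux JacobiAux2 JacobiAux3 JacobiAux4 JacobiAux5

variable {m : ℕ} (a b : ℤ → Matrix (Fin m) (Fin m) ℝ)

noncomputable def Phi (a b : ℤ → Matrix (Fin m) (Fin m) ℝ) (p : ℕ) : Polynomial (Polynomial ℝ) :=
  Polynomial.C (Polynomial.C (((2 : ℝ) ^ m)⁻¹)) *
    (Polynomial.C ((DR a b p).coeff m) +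
      2 * ∑ i ∈ Finset.range m,
        Polynomial.C ((DR a b p).coeff (m + 1 + i)) *
          Polynomial.Chebyshev.T (Polynomial ℝ) ((i : ℤ) + 1))

lemma two_eq_C : (2 : Polynomial (Polynomial ℝ)) = Polynomial.C 2 :=
  (map_ofNat (Polynomial.C : Polynomial ℝ →+* Polynomial (Polynomial ℝ)) 2).symm

lemma Phi_natDegree_le (p : ℕ) : (Phi a b p).natDegree ≤ m := by
  refine le_trans (Polynomial.natDegree_C_mul_le _ _) ?_
  refine le_trans (Polynomial.natDegree_add_le _ _) ?_
  rw [max_le_iff]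
  constructor
  · simp [Polynomial.natDegree_C]
  · rw [two_eq_C]
    refine le_trans (Polynomial.natDegree_C_mul_le _ _) ?_
    refine Polynomial.natDegree_sum_le_of_forall_le _ _ ?_
    intro i hi
    refine le_trans (Polynomial.natDegree_C_mul_le _ _) ?_
    have hi' := Finset.mem_range.mp hi
    exact le_trans (chebT_coeff i).1 (by omega)

lemma Phi_coeff_m (hm : 1 ≤ m) (p : ℕ) : (Phi a b p).coeff m = 1 := by
  obtain ⟨m', rfl⟩ : ∃ m', m = m' + 1 := ⟨m - 1, by omega⟩
  unfold Phi
  rw [Polynomial.coeff_C_mul, Polynomial.coeff_add, Polynomial.coeff_C, if_neg (by omega),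
    two_eq_C, Polynomial.coeff_C_mul, Polynomial.finset_sum_coeff]
  have hsum : ∑ i ∈ Finset.range (m' + 1),
      (Polynomial.C ((DR a b p).coeff (m' + 1 + 1 + i)) *
        Polynomial.Chebyshev.T (Polynomial ℝ) ((i : ℤ) + 1)).coeff (m' + 1)
      = (DR a b p).coeff ((m' + 1) + (m' + 1)) * 2 ^ m' := by
    rw [Finset.sum_eq_single m']
    · rw [Polynomial.coeff_C_mul, (chebT_coeff m').2]
      congr 2
      omega
    · intro i hi hne
      have hi' := Finset.mem_range.mp hi
      rw [Polynomial.coeff_C_mul,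
        Polynomial.coeff_eq_zero_of_natDegree_lt
          (lt_of_le_of_lt (chebT_coeff i).1 (by omega : i + 1 < m' + 1)),
        mul_zero]
    · intro h
      exact absurd (Finset.self_mem_range_succ m') h
  rw [hsum]
  have hlead : (DR a b p).coeff ((m' + 1) + (m' + 1)) = 1 := by
    have h1 := (DR_monic a b p).coeff_natDegree
    rwa [DR_natDegree] at h1
  rw [hlead, one_mul, zero_add]
  have h2p : (2 : Polynomial ℝ) * 2 ^ m' = Polynomial.C ((2 : ℝ) ^ (m' + 1)) := by
    rw [map_pow, show Polynomial.C (2 : ℝ) = (2 : Polynomial ℝ) from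
      map_ofNat (Polynomial.C : ℝ →+* Polynomial ℝ) 2, ← pow_succ']
  rw [h2p, ← _root_.map_mul, inv_mul_cancel₀ (pow_ne_zero _ two_ne_zero), Polynomial.C_1]

lemma Phi_monic (hm : 1 ≤ m) (p : ℕ) : (Phi a b p).Monic := by
  have h1 := Phi_coeff_m a b hm p
  have h2 := Phi_natDegree_le a b p
  have hne : Phi a b p ≠ 0 := by
    intro h
    rw [h, Polynomial.coeff_zero] at h1
    exact one_ne_zero h1.symm
  have h3 : m ≤ (Phi a b p).natDegree := Polynomial.le_natDegree_of_ne_zero (by rw [h1]; exact one_ne_zero)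
  have h4 : (Phi a b p).natDegree = m := le_antisymm h2 h3
  unfold Polynomial.Monic Polynomial.leadingCoeff
  rw [h4, h1]

lemma Phi_degree (hm : 1 ≤ m) (p : ℕ) : (Phi a b p).degree = (m : ℕ) := by
  have h1 := Phi_coeff_m a b hm p
  have hne : Phi a b p ≠ 0 := by
    intro h
    rw [h, Polynomial.coeff_zero] at h1
    exact one_ne_zero h1.symm
  rw [Polynomial.degree_eq_natDegree hne]
  norm_cast
  exact le_antisymm (Phi_natDegree_le a b p)
    (Polynomial.le_natDegree_of_ne_zero (by rw [h1]; exact one_ne_zero))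

noncomputable def evalPhi' (Φ : Polynomial (Polynomial ℝ)) (z ν : ℂ) : ℂ :=
  Polynomial.eval z
    (Polynomial.eval (Polynomial.C ν) (Φ.map (Polynomial.mapRingHom Complex.ofRealHom)))

lemma evalPhi'_eq (Φ : Polynomial (Polynomial ℝ)) (z ν : ℂ) :
    evalPhi' Φ z ν = Polynomial.eval₂ (ψ z) ν Φ := by
  have key : (Polynomial.evalRingHom z).comp
      ((Polynomial.evalRingHom (Polynomial.C ν)).comp
        (Polynomial.mapRingHom (Polynomial.mapRingHom Complex.ofRealHom)))
      = Polynomial.eval₂RingHom (ψ z) ν := by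
    apply Polynomial.ringHom_ext
    · intro r
      simp [ψ, Polynomial.eval_map]
    · simp [ψ]
  have h := RingHom.congr_fun key Φ
  simpa [evalPhi', Polynomial.coe_eval₂RingHom] using h

lemma Phi_spec (hm : 1 ≤ m) (p : ℕ) (ha_per : ∀ n : ℤ, a (n + p) = a n)
    (hb_sym : ∀ n : ℤ, (b n)ᵀ = b n) (ha_inv : ∀ n : ℤ, IsUnit (a n).det)
    (z τ : ℂ) (hτ : τ ≠ 0) :
    Dfun a b p z τ = (2 * τ) ^ m * evalPhi' (Phi a b p) z ((τ + τ⁻¹) / 2) := by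
  set ν := (τ + τ⁻¹) / 2 with hν
  set d : ℕ → ℂ := fun k => ψ z ((DR a b p).coeff k) with hd
  have h2m : (2 : ℂ) ^ m ≠ 0 := pow_ne_zero _ two_ne_zero
  -- evaluate Phi
  have hEval : evalPhi' (Phi a b p) z ν
      = ((2 : ℂ) ^ m)⁻¹ * (d m + 2 * ∑ i ∈ Finset.range m,
          d (m + 1 + i) * ((τ ^ (i + 1) + τ⁻¹ ^ (i + 1)) / 2)) := by
    rw [evalPhi'_eq]
    unfold Phi
    rw [Polynomial.eval₂_mul, Polynomial.eval₂_C, Polynomial.eval₂_add, Polynomial.eval₂_C,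
      Polynomial.eval₂_mul, Polynomial.eval₂_ofNat, Polynomial.eval₂_finset_sum]
    have hC : (ψ z) (Polynomial.C (((2:ℝ)^m)⁻¹)) = ((2:ℂ)^m)⁻¹ := by
      simp [ψ]
    rw [hC]
    congr 2
    congr 1
    apply Finset.sum_congr rfl
    intro i _
    rw [Polynomial.eval₂_mul, Polynomial.eval₂_C]
    congr 1
    rw [Polynomial.eval₂_eq_eval_map, Polynomial.Chebyshev.map_T]
    have hcast : ((i : ℤ) + 1) = ((i + 1 : ℕ) : ℤ) := by push_cast; ring
    rw [hcast, chebT_eval (i + 1) τ hτ]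
  -- expand Dfun
  have hL : Dfun a b p z τ = ∑ k ∈ Finset.range (m + m + 1), d k * τ ^ k := by
    rw [Dfun_eval]
    have hdeg : ((DR a b p).map (ψ z)).natDegree < m + m + 1 := by
      rw [(DR_monic a b p).natDegree_map, DR_natDegree]
      omega
    rw [Polynomial.eval_eq_sum_range' hdeg]
    apply Finset.sum_congr rfl
    intro k _
    rw [Polynomial.coeff_map]
  -- split the sum
  have hsplit : ∑ k ∈ Finset.range (m + m + 1), d k * τ ^ k
      = (∑ k ∈ Finset.range m, d k * τ ^ k) +
        (d m * τ ^ m + ∑ i ∈ Finset.range m, d (m + 1 + i) * τ ^ (m + 1 + i)) := by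
    rw [← Finset.sum_range_add_sum_Ico (fun k => d k * τ ^ k) (show m ≤ m + m + 1 by omega)]
    congr 1
    rw [Finset.sum_Ico_eq_sum_range]
    rw [show m + m + 1 - m = m + 1 from by omega, Finset.sum_range_succ']
    have hcg : ∀ i ∈ Finset.range m,
        d (m + (i + 1)) * τ ^ (m + (i + 1)) = d (m + 1 + i) * τ ^ (m + 1 + i) := by
      intro i _
      rw [show m + (i + 1) = m + 1 + i from by omega]
    rw [Finset.sum_congr rfl hcg]
    have h0 : d (m + 0) * τ ^ (m + 0) = d m * τ ^ m := by norm_num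
    rw [h0, add_comm]
  -- coefficient symmetry
  have hsymm : ∀ i ∈ Finset.range m, d (m - 1 - i) = d (m + 1 + i) := by
    intro i hi
    have hi' := Finset.mem_range.mp hi
    have h := DR_coeff_symm a b p ha_per hb_sym ha_inv (m + 1 + i) (by omega)
    rw [show m + m - (m + 1 + i) = m - 1 - i from by omega] at h
    rw [hd]
    exact (congrArg (ψ z) h).symm
  have hlow : ∑ k ∈ Finset.range m, d k * τ ^ k
      = ∑ i ∈ Finset.range m, d (m + 1 + i) * τ ^ (m - 1 - i) := by
    rw [← Finset.sum_range_reflect (fun k => d k * τ ^ k) m]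
    apply Finset.sum_congr rfl
    intro i hi
    rw [hsymm i hi]
  -- power identities
  have hpow1 : ∀ i, τ ^ m * τ ^ (i + 1) = τ ^ (m + 1 + i) := by
    intro i
    rw [← pow_add]
    congr 1
    omega
  have hpow2 : ∀ i ∈ Finset.range m, τ ^ m * τ⁻¹ ^ (i + 1) = τ ^ (m - 1 - i) := by
    intro i hi
    have hi' := Finset.mem_range.mp hi
    have : τ ^ m = τ ^ (m - 1 - i) * τ ^ (i + 1) := by
      rw [← pow_add]
      congr 1
      omega
    rw [this, mul_assoc, ← mul_pow, mul_inv_cancel₀ hτ, one_pow, mul_one]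
  -- assemble
  rw [hL, hsplit, hlow, hEval]
  set S : ℂ := d m + 2 * ∑ i ∈ Finset.range m,
      d (m + 1 + i) * ((τ ^ (i + 1) + τ⁻¹ ^ (i + 1)) / 2) with hS
  have hR : (2 * τ) ^ m * (((2 : ℂ) ^ m)⁻¹ * S) = τ ^ m * S := by
    rw [mul_pow]
    field_simp
  rw [hR, hS, mul_add, Finset.mul_sum, Finset.mul_sum]
  have hterm : ∀ i ∈ Finset.range m,
      τ ^ m * (2 * (d (m + 1 + i) * ((τ ^ (i + 1) + τ⁻¹ ^ (i + 1)) / 2)))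
        = d (m + 1 + i) * τ ^ (m + 1 + i) + d (m + 1 + i) * τ ^ (m - 1 - i) := by
    intro i hi
    calc τ ^ m * (2 * (d (m + 1 + i) * ((τ ^ (i + 1) + τ⁻¹ ^ (i + 1)) / 2)))
        = d (m + 1 + i) * (τ ^ m * τ ^ (i + 1)) +
            d (m + 1 + i) * (τ ^ m * τ⁻¹ ^ (i + 1)) := by ring
      _ = _ := by rw [hpow1 i, hpow2 i hi]
  rw [Finset.sum_congr rfl hterm, Finset.sum_add_distrib]
  ring

end JacobiAux6

namespace JacobiAux7
open JacobiAux3 JacobiAux6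

lemma exists_tau (ν : ℂ) : ∃ τ : ℂ, τ ≠ 0 ∧ (τ + τ⁻¹) / 2 = ν := by
  set q : Polynomial ℂ := Polynomial.C 1 * Polynomial.X ^ 2 +
    Polynomial.C (-(2 * ν)) * Polynomial.X + Polynomial.C 1 with hq
  have hdeg : q.degree = 2 := Polynomial.degree_quadratic one_ne_zero
  obtain ⟨τ, hroot⟩ := Complex.exists_root (f := q) (by rw [hdeg]; norm_num)
  have heval : τ ^ 2 - 2 * ν * τ + 1 = 0 := by
    have h := hroot
    unfold Polynomial.IsRoot at h
    rw [hq] at h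
    simp only [Polynomial.eval_add, Polynomial.eval_mul, Polynomial.eval_pow,
      Polynomial.eval_C, Polynomial.eval_X, one_mul] at h
    linear_combination h
  have hτ : τ ≠ 0 := by
    intro h0
    rw [h0] at heval
    norm_num at heval
  refine ⟨τ, hτ, ?_⟩
  field_simp
  linear_combination heval

theorem exists_unique_Phi' (m p : ℕ) (hm : 1 ≤ m) (hp : 1 ≤ p)
    (a b : ℤ → Matrix (Fin m) (Fin m) ℝ)
    (ha_per : ∀ n : ℤ, a (n + p) = a n) (hb_per : ∀ n : ℤ, b (n + p) = b n)
    (hb_sym : ∀ n : ℤ, (b n)ᵀ = b n) (ha_inv : ∀ n : ℤ, IsUnit (a n).det) :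
    ∃! Φ : Polynomial (Polynomial ℝ),
      Φ.degree = (m : ℕ) ∧ Φ.Monic ∧
      ∀ z τ : ℂ, τ ≠ 0 →
        Dfun a b p z τ = (2 * τ) ^ m * evalPhi' Φ z ((τ + τ⁻¹) / 2) := by
  refine ⟨Phi a b p, ⟨Phi_degree a b hm p, Phi_monic a b hm p,
    fun z τ hτ => Phi_spec a b hm p ha_per hb_sym ha_inv z τ hτ⟩, ?_⟩
  rintro Φ' ⟨hdeg', hmon', hid'⟩
  have key : ∀ z ν : ℂ, evalPhi' Φ' z ν = evalPhi' (Phi a b p) z ν := by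
    intro z ν
    obtain ⟨τ, hτ, hτν⟩ := exists_tau ν
    have h1 := hid' z τ hτ
    have h2 := Phi_spec a b hm p ha_per hb_sym ha_inv z τ hτ
    rw [hτν] at h1 h2
    have h3 : (2 * τ) ^ m * evalPhi' Φ' z ν = (2 * τ) ^ m * evalPhi' (Phi a b p) z ν :=
      h1.symm.trans h2
    exact mul_left_cancel₀ (pow_ne_zero _ (mul_ne_zero two_ne_zero hτ)) h3
  set Q : Polynomial (Polynomial ℂ) :=
    Φ'.map (Polynomial.mapRingHom Complex.ofRealHom) -
      (Phi a b p).map (Polynomial.mapRingHom Complex.ofRealHom) with hQdef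
  have hQ2 : ∀ ν : ℂ, Polynomial.eval (Polynomial.C ν) Q = 0 := by
    intro ν
    apply Polynomial.funext
    intro z
    rw [hQdef, Polynomial.eval_sub, Polynomial.eval_sub, Polynomial.eval_zero]
    have := key z ν
    unfold evalPhi' at this
    rw [this]
    ring
  have hQ0 : Q = 0 := by
    apply Polynomial.eq_zero_of_infinite_isRoot
    apply Set.Infinite.mono (s := Set.range (Polynomial.C : ℂ → Polynomial ℂ))
    · rintro x ⟨ν, rfl⟩
      exact hQ2 ν
    · exact Set.infinite_range_of_injective Polynomial.C_injective
  have hmaps : Φ'.map (Polynomial.mapRingHom Complex.ofRealHom) =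
      (Phi a b p).map (Polynomial.mapRingHom Complex.ofRealHom) := by
    have := sub_eq_zero.mp hQ0
    exact this
  exact Polynomial.map_injective (Polynomial.mapRingHom Complex.ofRealHom)
    (Polynomial.map_injective Complex.ofRealHom Complex.ofReal_injective) hmaps

end JacobiAux7

/-- There is a unique real two-variable polynomial `Φ(z,ν)`, monic of degree `m` in `ν`,
with `D(z,τ) = (2τ)^m Φ(z, (τ+τ⁻¹)/2)` for all `z` and all `τ ≠ 0`. -/
theorem exists_unique_Phi (m p : ℕ) (hm : 1 ≤ m) (hp : 1 ≤ p)
    (a b : ℤ → Matrix (Fin m) (Fin m) ℝ)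
    (ha_per : ∀ n : ℤ, a (n + p) = a n) (hb_per : ∀ n : ℤ, b (n + p) = b n)
    (hb_sym : ∀ n : ℤ, (b n)ᵀ = b n) (ha_inv : ∀ n : ℤ, IsUnit (a n).det) :
    ∃! Φ : Polynomial (Polynomial ℝ),
      Φ.degree = (m : ℕ) ∧ Φ.Monic ∧
      ∀ z τ : ℂ, τ ≠ 0 →
        Dfun a b p z τ = (2 * τ) ^ m * evalPhi Φ z ((τ + τ⁻¹) / 2) := by
  have h := JacobiAux7.exists_unique_Phi' m p hm hp a b ha_per hb_per hb_sym ha_inv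
  exact h
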